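/- Let R = Rᵀ ≻ 0 and F + Fᵀ ⪰ 0 with A = (R+F)^{-1}(R−F). Define V(x) = xᵀ R x. Then for all x ∈ ℝⁿ, V(Ax) − V(x) = −(Ax + x)ᵀ ((F+Fᵀ)/2) (Ax + x) ≤ 0. -/

import Mathlib

open Matrix

lemma swapFT {n : ℕ} (F : Matrix (Fin n) (Fin n) ℝ) (v w : Fin n → ℝ) :
    v ⬝ᵥ Fᵀ.mulVec w = w ⬝ᵥ F.mulVec v := by
  rw [Matrix.dotProduct_mulVec, Matrix.vecMul_transpose, dotProduct_comm]

/-- Exact per-step energy decrease of the source-free FDTD system: with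
`A = (R+F)⁻¹(R−F)` and `V(x) = xᵀ R x`,
`V(Ax) − V(x) = −(Ax + x)ᵀ ((F+Fᵀ)/2) (Ax + x) ≤ 0`. -/
theorem stmt9 {n : ℕ}
    (R F : Matrix (Fin n) (Fin n) ℝ)
    (hR : R.PosDef) (hRsym : R = Rᵀ) (hF : (F + Fᵀ).PosSemidef)
    (A : Matrix (Fin n) (Fin n) ℝ) (hA : A = (R + F)⁻¹ * (R - F))
    (V : (Fin n → ℝ) → ℝ) (hV : ∀ x, V x = x ⬝ᵥ R.mulVec x) :
    ∀ x : Fin n → ℝ,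
      V (A.mulVec x) - V x =
        -((A.mulVec x + x) ⬝ᵥ (((1 : ℝ) / 2) • (F + Fᵀ)).mulVec (A.mulVec x + x)) ∧
      V (A.mulVec x) - V x ≤ 0 := by
  -- R + F is invertible
  have hinj : Function.Injective ((R + F).mulVec) := by
    intro u v huv
    by_contra hne
    have hz : (R + F).mulVec (u - v) = 0 := by
      rw [Matrix.mulVec_sub, huv, sub_self]
    have hsub : u - v ≠ 0 := sub_ne_zero.2 hne
    have hpos : 0 < (u - v) ⬝ᵥ R.mulVec (u - v) := by
      simpa using hR.dotProduct_mulVec_pos hsub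
    have hsemi : 0 ≤ (u - v) ⬝ᵥ (F + Fᵀ).mulVec (u - v) := by
      simpa using hF.dotProduct_mulVec_nonneg (u - v)
    have hFF : (u - v) ⬝ᵥ Fᵀ.mulVec (u - v) = (u - v) ⬝ᵥ F.mulVec (u - v) :=
      swapFT F (u - v) (u - v)
    have h0 : (u - v) ⬝ᵥ (R + F).mulVec (u - v) = 0 := by rw [hz, dotProduct_zero]
    simp only [Matrix.add_mulVec, dotProduct_add, hFF] at h0 hsemi
    linarith
  have hunit : IsUnit (R + F).det :=
    Matrix.isUnit_iff_isUnit_det _ |>.1 (Matrix.mulVec_injective_iff_isUnit.1 hinj)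
  intro x
  set y := A.mulVec x with hy
  have h1 : (R + F).mulVec y = (R - F).mulVec x := by
    rw [hy, hA, Matrix.mulVec_mulVec, Matrix.mul_nonsing_inv_cancel_left _ _ hunit]
  -- dot with y and x
  have hd1 : y ⬝ᵥ (R + F).mulVec y = y ⬝ᵥ (R - F).mulVec x := by rw [h1]
  have hd2 : x ⬝ᵥ (R + F).mulVec y = x ⬝ᵥ (R - F).mulVec x := by rw [h1]
  have hRyx : y ⬝ᵥ R.mulVec x = x ⬝ᵥ R.mulVec y := by
    conv_lhs => rw [hRsym]
    exact swapFT R y x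
  have hFyx : y ⬝ᵥ Fᵀ.mulVec x = x ⬝ᵥ F.mulVec y := swapFT F y x
  have hFxy : x ⬝ᵥ Fᵀ.mulVec y = y ⬝ᵥ F.mulVec x := swapFT F x y
  have hFyy : y ⬝ᵥ Fᵀ.mulVec y = y ⬝ᵥ F.mulVec y := swapFT F y y
  have hFxx : x ⬝ᵥ Fᵀ.mulVec x = x ⬝ᵥ F.mulVec x := swapFT F x x
  simp only [Matrix.add_mulVec, Matrix.sub_mulVec, dotProduct_add,
    dotProduct_sub] at hd1 hd2
  have key : V y - V x =
      -((y + x) ⬝ᵥ (((1 : ℝ) / 2) • (F + Fᵀ)).mulVec (y + x)) := by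
    rw [hV, hV]
    simp only [Matrix.smul_mulVec, Matrix.add_mulVec, Matrix.mulVec_add,
      dotProduct_smul, dotProduct_add, add_dotProduct, smul_eq_mul]
    linarith [hd1, hd2, hRyx, hFyx, hFxy, hFyy, hFxx]
  refine ⟨key, ?_⟩
  rw [key]
  have := hF.dotProduct_mulVec_nonneg (y + x)
  simp only [Matrix.smul_mulVec, dotProduct_smul, smul_eq_mul] at *
  simp only [star_trivial] at this
  nlinarith
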